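/- The |·|-twisted current bracket makes 𝔫[u] a Lie algebra over ℚ: the ℚ-bilinear bracket determined by [x u^p, y u^q] = (|a|^p |b|^q / |a+b|^{p+q}) [x,y] u^{p+q} for x ∈ 𝔫_a, y ∈ 𝔫_b, p,q ∈ ℕ is antisymmetric ([ξ,η] = −[η,ξ]) and satisfies the Jacobi identity [[ξ,η],ζ] + [[η,ζ],ξ] + [[ζ,ξ],η] = 0 for all ξ, η, ζ ∈ 𝔫[u]. -/

import Mathlib

/-- The structure constant `|a|^p * |b|^q / |a+b|^(p+q)` of the `|·|`-twisted
current bracket. -/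
noncomputable def twistCoeff {M : Type*} [AddCommMonoid M] (absM : M →+ ℤ)
    (a b : M) (p q : ℕ) : ℚ :=
  ((absM a : ℚ) ^ p * (absM b : ℚ) ^ q) / ((absM (a + b) : ℚ) ^ (p + q))

private theorem jacobi_aux {L : Type*} [LieRing L] (x y z : L) :
    ⁅⁅x, y⁆, z⁆ + ⁅⁅y, z⁆, x⁆ + ⁅⁅z, x⁆, y⁆ = 0 := by
  have h := lie_jacobi x y z
  have e1 : ⁅⁅x, y⁆, z⁆ = -⁅z, ⁅x, y⁆⁆ := neg_eq_iff_eq_neg.mp (lie_skew z ⁅x, y⁆)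
  have e2 : ⁅⁅y, z⁆, x⁆ = -⁅x, ⁅y, z⁆⁆ := neg_eq_iff_eq_neg.mp (lie_skew x ⁅y, z⁆)
  have e3 : ⁅⁅z, x⁆, y⁆ = -⁅y, ⁅z, x⁆⁆ := neg_eq_iff_eq_neg.mp (lie_skew y ⁅z, x⁆)
  rw [e1, e2, e3]
  have : -⁅z, ⁅x, y⁆⁆ + -⁅x, ⁅y, z⁆⁆ + -⁅y, ⁅z, x⁆⁆
      = -(⁅x, ⁅y, z⁆⁆ + ⁅y, ⁅z, x⁆⁆ + ⁅z, ⁅x, y⁆⁆) := by abel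
  rw [this, h, neg_zero]

private theorem coeff_helper (A B C D F : ℚ) (hD : D ≠ 0) :
    A * B / D * (D * C / F) = A * B * C / F := by
  rw [mul_div_assoc D C F, ← mul_assoc, div_mul_cancel₀ _ hD, ← mul_div_assoc]

private theorem add_aux {G : Type*} [AddCommGroup G] {a1 a2 b1 b2 c1 c2 : G}
    (h1 : a1 + b1 + c1 = 0) (h2 : a2 + b2 + c2 = 0) :
    a1 + a2 + (b1 + b2) + (c1 + c2) = 0 := by
  have h : a1 + a2 + (b1 + b2) + (c1 + c2) = (a1 + b1 + c1) + (a2 + b2 + c2) := by abel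
  rw [h, h1, h2, add_zero]

/-- Let `𝔫 = ⊕_{a ∈ M} 𝔫_a` be an `M`-graded Lie algebra over `ℚ`
with `𝔫_0 = 0` and `|·| : M → ℤ` an additive monoid homomorphism positive on
nonzero elements.  The `|·|`-twisted current bracket on `𝔫[u]` (modelled as
`ℕ →₀ 𝔫`, with `x u^p = Finsupp.single p x`), i.e. the `ℚ`-bilinear bracket `B`
determined by `B (x u^p) (y u^q) = (|a|^p |b|^q / |a+b|^(p+q)) • ⁅x,y⁆ u^(p+q)`
for homogeneous `x ∈ 𝔫_a`, `y ∈ 𝔫_b`, is antisymmetric and satisfies the Jacobi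
identity. -/
theorem twisted_current_bracket_is_lie_algebra
    {M : Type*} [AddCommMonoid M] [DecidableEq M]
    {L : Type*} [LieRing L] [LieAlgebra ℚ L]
    (𝒢 : M → Submodule ℚ L)
    (hInternal : DirectSum.IsInternal 𝒢)
    (hzero : 𝒢 0 = ⊥)
    (hbracket : ∀ (a b : M) (x y : L), x ∈ 𝒢 a → y ∈ 𝒢 b → ⁅x, y⁆ ∈ 𝒢 (a + b))
    (absM : M →+ ℤ)
    (habs : ∀ a : M, a ≠ 0 → 0 < absM a)
    (B : (ℕ →₀ L) →ₗ[ℚ] (ℕ →₀ L) →ₗ[ℚ] (ℕ →₀ L))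
    (hB : ∀ (a b : M) (x y : L), x ∈ 𝒢 a → y ∈ 𝒢 b → ∀ p q : ℕ,
      B (Finsupp.single p x) (Finsupp.single q y)
        = Finsupp.single (p + q) (twistCoeff absM a b p q • ⁅x, y⁆)) :
    (∀ ξ η : ℕ →₀ L, B ξ η = - B η ξ) ∧
      (∀ ξ η ζ : ℕ →₀ L, B (B ξ η) ζ + B (B η ζ) ξ + B (B ζ ξ) η = 0) := by
  classical
  have htop : (⨆ a, 𝒢 a) = ⊤ := hInternal.submodule_iSup_eq_top
  set S : Set (ℕ →₀ L) := {f | ∃ p a x, x ∈ 𝒢 a ∧ f = Finsupp.single p x} with hS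
  have hsingle : ∀ (p : ℕ) (x : L), Finsupp.single p x ∈ Submodule.span ℚ S := by
    intro p x
    have hx : x ∈ (⨆ a, 𝒢 a) := htop ▸ Submodule.mem_top
    refine Submodule.iSup_induction 𝒢
      (motive := fun y => Finsupp.single p y ∈ Submodule.span ℚ S) hx ?_ ?_ ?_
    · intro a y hy; exact Submodule.subset_span ⟨p, a, y, hy, rfl⟩
    · simp
    · intro y z hy hz
      rw [Finsupp.single_add]; exact Submodule.add_mem _ hy hz
  have hspan : Submodule.span ℚ S = ⊤ := by
    rw [eq_top_iff]; rintro f -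
    induction f using Finsupp.induction with
    | zero => exact Submodule.zero_mem _
    | single_add p x f _ _ ih => exact Submodule.add_mem _ (hsingle p x) ih
  have hmemzero : ∀ (a : M) (x : L), x ∈ 𝒢 a → a = 0 → x = 0 := by
    intro a x hx h; subst h; rw [hzero] at hx; exact hx
  -- the fully combined coefficient for double brackets
  have hBB : ∀ (a b c : M) (x y z : L), x ∈ 𝒢 a → y ∈ 𝒢 b → z ∈ 𝒢 c → ∀ p q r : ℕ,
      B (B (Finsupp.single p x) (Finsupp.single q y)) (Finsupp.single r z)
        = Finsupp.single (p + q + r)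
            ((((absM a : ℚ) ^ p * (absM b : ℚ) ^ q * (absM c : ℚ) ^ r)
              / ((absM (a + b + c) : ℚ) ^ (p + q + r))) • ⁅⁅x, y⁆, z⁆) := by
    intro a b c x y z hx hy hz p q r
    by_cases ha : a = 0
    · have hx0 : x = 0 := hmemzero a x hx ha
      subst hx0; simp
    by_cases hb : b = 0
    · have hy0 : y = 0 := hmemzero b y hy hb
      subst hy0; simp
    by_cases hc : c = 0
    · have hz0 : z = 0 := hmemzero c z hz hc
      subst hz0; simp
    · have hab : ((absM (a + b) : ℚ)) ≠ 0 := by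
        have h : (0 : ℤ) < absM (a + b) := by
          rw [map_add]; exact add_pos (habs a ha) (habs b hb)
        exact_mod_cast h.ne'
      have hco : twistCoeff absM a b p q * twistCoeff absM (a + b) c (p + q) r
          = ((absM a : ℚ) ^ p * (absM b : ℚ) ^ q * (absM c : ℚ) ^ r)
              / ((absM (a + b + c) : ℚ) ^ (p + q + r)) := by
        rw [twistCoeff, twistCoeff]
        exact coeff_helper _ _ _ _ _ (pow_ne_zero _ hab)
      rw [hB a b x y hx hy p q, ← Finsupp.smul_single, map_smul, LinearMap.smul_apply,
        hB (a + b) c ⁅x, y⁆ z (hbracket a b x y hx hy) hz (p + q) r,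
        Finsupp.smul_single, smul_smul, hco]
  refine ⟨?_, ?_⟩
  · -- antisymmetry
    have key : B = -B.flip := by
      apply LinearMap.ext_on hspan
      intro ξ hξ
      apply LinearMap.ext_on hspan
      intro η hη
      obtain ⟨p, a, x, hx, rfl⟩ := hξ
      obtain ⟨q, b, y, hy, rfl⟩ := hη
      simp only [LinearMap.neg_apply, LinearMap.flip_apply]
      have hc : twistCoeff absM b a q p = twistCoeff absM a b p q := by
        rw [twistCoeff, twistCoeff, add_comm b a, add_comm q p,
          mul_comm ((absM b : ℚ) ^ q) ((absM a : ℚ) ^ p)]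
      rw [hB a b x y hx hy p q, hB b a y x hy hx q p, hc, add_comm q p,
        ← lie_skew y x, smul_neg, Finsupp.single_neg, neg_neg]
    intro ξ η
    conv_lhs => rw [key]
    simp
  · -- Jacobi identity
    intro ξ η ζ
    have hξ : ξ ∈ Submodule.span ℚ S := hspan ▸ Submodule.mem_top
    have hη : η ∈ Submodule.span ℚ S := hspan ▸ Submodule.mem_top
    have hζ : ζ ∈ Submodule.span ℚ S := hspan ▸ Submodule.mem_top
    induction hξ using Submodule.span_induction with
    | add ξ₁ ξ₂ _ _ h1 h2 =>
      simp only [map_add, LinearMap.add_apply] at h1 h2 ⊢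
      exact add_aux h1 h2
    | zero => simp
    | smul t ξ' _ h =>
      simp only [map_smul, LinearMap.smul_apply] at h ⊢
      rw [← smul_add, ← smul_add, h, smul_zero]
    | mem ξ' hξ' =>
      induction hη using Submodule.span_induction with
      | add η₁ η₂ _ _ h1 h2 =>
        simp only [map_add, LinearMap.add_apply] at h1 h2 ⊢
        exact add_aux h1 h2
      | zero => simp
      | smul t η' _ h =>
        simp only [map_smul, LinearMap.smul_apply] at h ⊢
        rw [← smul_add, ← smul_add, h, smul_zero]
      | mem η' hη' =>
        induction hζ using Submodule.span_induction with
        | add ζ₁ ζ₂ _ _ h1 h2 =>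
          simp only [map_add, LinearMap.add_apply] at h1 h2 ⊢
          exact add_aux h1 h2
        | zero => simp
        | smul t ζ' _ h =>
          simp only [map_smul, LinearMap.smul_apply] at h ⊢
          rw [← smul_add, ← smul_add, h, smul_zero]
        | mem ζ' hζ' =>
          obtain ⟨p, a, x, hx, rfl⟩ := hξ'
          obtain ⟨q, b, y, hy, rfl⟩ := hη'
          obtain ⟨r, c, z, hz, rfl⟩ := hζ'
          have e1 : b + c + a = a + b + c := by abel
          have e2 : c + a + b = a + b + c := by abel
          have e3 : q + r + p = p + q + r := by omega
          have e4 : r + p + q = p + q + r := by omega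
          have m1 : ((absM a : ℚ) ^ p * (absM b : ℚ) ^ q * (absM c : ℚ) ^ r)
              = ((absM b : ℚ) ^ q * (absM c : ℚ) ^ r * (absM a : ℚ) ^ p) := by ring
          have m2 : ((absM a : ℚ) ^ p * (absM b : ℚ) ^ q * (absM c : ℚ) ^ r)
              = ((absM c : ℚ) ^ r * (absM a : ℚ) ^ p * (absM b : ℚ) ^ q) := by ring
          rw [hBB a b c x y z hx hy hz p q r, hBB b c a y z x hy hz hx q r p,
            hBB c a b z x y hz hx hy r p q, e1, e2, e3, e4, ← m1, ← m2,
            ← Finsupp.single_add, ← Finsupp.single_add, ← smul_add, ← smul_add,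
            jacobi_aux, smul_zero, Finsupp.single_zero]
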